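/- Let P be a Poisson bivector on a smooth manifold M, f ∈ C^∞(M) a Casimir function of P, and B a 2-form on M; set C = P♯∘B♭. Then both (e^f P, C, e^{−f}(−dB_C + df∧B_C), e^{−f}(dB − df∧B)) and (e^f P, e^f C, e^f(−dB_C − df∧B_C), dB) are Poisson quasi-Nijenhuis structures with background on M. -/

import Mathlib

open scoped Manifold

noncomputable section

/-! ### Smooth functions, vector fields and tensor calculus on a manifold

We work with the algebraic (Lie–Rinehart) presentation of the Cartan calculus of a
smooth manifold `M`:  smooth real functions form a commutative ring, vector fields are
the derivations of that ring, differential forms are alternating multilinear maps on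
vector fields with values in functions, and all classical operations (`d`, interior
products, Lie derivatives, Nijenhuis torsion, concomitants, ...) are given by their
global Koszul-type formulas. -/

variable {EM : Type*} [NormedAddCommGroup EM] [NormedSpace ℝ EM]
  {HM : Type*} [TopologicalSpace HM] (IM : ModelWithCorners ℝ EM HM)
  (M : Type*) [TopologicalSpace M] [ChartedSpace HM M]

/-- The commutative ring of smooth real valued functions on `M`. -/
abbrev SmoothR := C^(⊤ : ℕ∞)⟮IM, M; ℝ⟯

/-- Vector fields on `M`, presented as derivations of the ring of smooth functions. -/
abbrev VF := Derivation ℝ (SmoothR IM M) (SmoothR IM M)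

/-- Covariant 1-tensors (raw). -/
abbrev Cov1 := VF IM M → SmoothR IM M

/-- Covariant 2-tensors (raw). -/
abbrev Cov2 := VF IM M → VF IM M → SmoothR IM M

/-- Covariant 3-tensors (raw). -/
abbrev Cov3 := VF IM M → VF IM M → VF IM M → SmoothR IM M

/-- Covariant 4-tensors (raw). -/
abbrev Cov4 := VF IM M → VF IM M → VF IM M → VF IM M → SmoothR IM M

variable {IM M}

/-- A covariant 1-tensor is a (smooth) 1-form when it is `C^∞(M)`-linear. -/
def IsOneForm (α : Cov1 IM M) : Prop :=
  (∀ X Y, α (X + Y) = α X + α Y) ∧ ∀ (f : SmoothR IM M) X, α (f • X) = f * α X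

/-- A covariant 2-tensor is a (smooth) 2-form when it is `C^∞(M)`-bilinear and
alternating. -/
def IsTwoForm (B : Cov2 IM M) : Prop :=
  (∀ X, IsOneForm (B X)) ∧ (∀ Y, IsOneForm fun X => B X Y) ∧ ∀ X, B X X = 0

/-- A covariant 3-tensor is a (smooth) 3-form when it is `C^∞(M)`-trilinear and
alternating. -/
def IsThreeForm (φ : Cov3 IM M) : Prop :=
  (∀ X Y, IsOneForm (φ X Y)) ∧ (∀ X Z, IsOneForm fun Y => φ X Y Z) ∧
    (∀ Y Z, IsOneForm fun X => φ X Y Z) ∧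
    (∀ X Y, φ X X Y = 0) ∧ (∀ X Y, φ X Y Y = 0) ∧ ∀ X Y, φ X Y X = 0

/-- A `(1,1)`-tensor is a `C^∞(M)`-linear endomorphism of vector fields. -/
def IsTensor11 (A : VF IM M → VF IM M) : Prop :=
  (∀ X Y, A (X + Y) = A X + A Y) ∧ ∀ (f : SmoothR IM M) X, A (f • X) = f • A X

/-- The differential of a function, as a covariant 1-tensor. -/
def dF (f : SmoothR IM M) : Cov1 IM M := fun X => X f

/-- Exterior differential of a 1-tensor (Koszul formula). -/
def d1 (α : Cov1 IM M) : Cov2 IM M := fun X Y => X (α Y) - Y (α X) - α ⁅X, Y⁆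

/-- Exterior differential of a 2-tensor (Koszul formula). -/
def d2 (B : Cov2 IM M) : Cov3 IM M := fun X Y Z =>
  X (B Y Z) - Y (B X Z) + Z (B X Y) - B ⁅X, Y⁆ Z + B ⁅X, Z⁆ Y - B ⁅Y, Z⁆ X

/-- Exterior differential of a 3-tensor (Koszul formula). -/
def d3 (φ : Cov3 IM M) : Cov4 IM M := fun X Y Z W =>
  X (φ Y Z W) - Y (φ X Z W) + Z (φ X Y W) - W (φ X Y Z)
    - φ ⁅X, Y⁆ Z W + φ ⁅X, Z⁆ Y W - φ ⁅X, W⁆ Y Z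
    - φ ⁅Y, Z⁆ X W + φ ⁅Y, W⁆ X Z - φ ⁅Z, W⁆ X Y

/-- Lie derivative of a 1-tensor along a vector field. -/
def lieDer (X : VF IM M) (α : Cov1 IM M) : Cov1 IM M := fun Y => X (α Y) - α ⁅X, Y⁆

/-- The transpose `Aᵗ` of a `(1,1)`-tensor acting on covariant 1-tensors. -/
def transp (A : VF IM M → VF IM M) (α : Cov1 IM M) : Cov1 IM M := fun X => α (A X)

/-- The degree-zero derivation `ι_A` on 2-tensors. -/
def iota2 (A : VF IM M → VF IM M) (B : Cov2 IM M) : Cov2 IM M := fun X Y =>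
  B (A X) Y + B X (A Y)

/-- The degree-zero derivation `ι_A` on 3-tensors. -/
def iota3 (A : VF IM M → VF IM M) (φ : Cov3 IM M) : Cov3 IM M := fun X Y Z =>
  φ (A X) Y Z + φ X (A Y) Z + φ X Y (A Z)

/-- The degree-zero derivation `ι_A` on 4-tensors. -/
def iota4 (A : VF IM M → VF IM M) (ω : Cov4 IM M) : Cov4 IM M := fun X Y Z W =>
  ω (A X) Y Z W + ω X (A Y) Z W + ω X Y (A Z) W + ω X Y Z (A W)

/-- The derivation `d_A = ι_A ∘ d - d ∘ ι_A` on 2-tensors. -/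
def dA2 (A : VF IM M → VF IM M) (B : Cov2 IM M) : Cov3 IM M :=
  iota3 A (d2 B) - d2 (iota2 A B)

/-- The derivation `d_A = ι_A ∘ d - d ∘ ι_A` on 3-tensors. -/
def dA3 (A : VF IM M → VF IM M) (φ : Cov3 IM M) : Cov4 IM M :=
  iota4 A (d3 φ) - d3 (iota3 A φ)

/-- The Nijenhuis torsion of a `(1,1)`-tensor. -/
def torsion (A : VF IM M → VF IM M) (X Y : VF IM M) : VF IM M :=
  ⁅A X, A Y⁆ - A (⁅A X, Y⁆ + ⁅X, A Y⁆ - A ⁅X, Y⁆)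

/-- A bivector field, encoded through its sharp map `P♯ : Ω¹(M) → 𝔛(M)`:
it is `C^∞(M)`-linear and skew-symmetric. -/
def IsBivector (P : Cov1 IM M → VF IM M) : Prop :=
  (∀ α β, P (α + β) = P α + P β) ∧ (∀ (f : SmoothR IM M) α, P (f • α) = f • P α) ∧
    ∀ α β : Cov1 IM M, IsOneForm α → IsOneForm β → α (P β) = - β (P α)

/-- The function `P(α,β)` attached to a bivector `P` (through `P♯`) and two
covariant 1-tensors. -/
def bivFun (P : Cov1 IM M → VF IM M) (α β : Cov1 IM M) : SmoothR IM M := β (P α)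

/-- The Poisson bracket of functions associated with a bivector. -/
def pbracket (P : Cov1 IM M → VF IM M) (f g : SmoothR IM M) : SmoothR IM M :=
  P (dF f) g

/-- A Poisson bivector: a bivector whose bracket of functions satisfies the Jacobi
identity (equivalently, `[P,P] = 0`). -/
def IsPoisson (P : Cov1 IM M → VF IM M) : Prop :=
  IsBivector P ∧ ∀ f g h : SmoothR IM M,
    pbracket P f (pbracket P g h) + pbracket P g (pbracket P h f)
      + pbracket P h (pbracket P f g) = 0

/-- The concomitant `C_{P,A}` of a bivector `P` and a `(1,1)`-tensor `A`,
evaluated on two covariant 1-tensors; formula (1.8) of the paper. -/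
def concom (P : Cov1 IM M → VF IM M) (A : VF IM M → VF IM M) (α β : Cov1 IM M) :
    Cov1 IM M :=
  lieDer (P β) (transp A α) - lieDer (P α) (transp A β)
    + transp A (lieDer (P α) β) - transp A (lieDer (P β) α)
    + dF (bivFun P (transp A α) β) - transp A (dF (bivFun P α β))

/-- The 3-form `ℋ^{S,T}(X,Y,Z) = Σ_{cyclic} H(SX,TY,Z)` built from a 3-tensor and two
`(1,1)`-tensors. -/
def cyc (H : Cov3 IM M) (S T : VF IM M → VF IM M) : Cov3 IM M := fun X Y Z =>
  H (S X) (T Y) Z + H (S Y) (T Z) X + H (S Z) (T X) Y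

/-- The 1-tensor `ι_{X∧Y}ω` (convention `ι_{X∧Y}ω = ι_Y ι_X ω`). -/
def ins2 (X Y : VF IM M) (ω : Cov3 IM M) : Cov1 IM M := fun Z => ω X Y Z

/-- `B_C(X,Y) = B(CX,Y)`. -/
def lcomp (B : Cov2 IM M) (C : VF IM M → VF IM M) : Cov2 IM M := fun X Y => B (C X) Y

/-- A Poisson quasi-Nijenhuis structure with background `(P,A,φ,H)` on `M`
(Definition 1.1 of the paper): `P` is a Poisson bivector, `A` a `(1,1)`-tensor, `φ` and
`H` closed 3-forms, satisfying the four compatibility conditions (2.1)–(2.4). -/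
def IsPqNb (P : Cov1 IM M → VF IM M) (A : VF IM M → VF IM M) (φ H : Cov3 IM M) : Prop :=
  IsPoisson P ∧ IsTensor11 A ∧
    IsThreeForm φ ∧ d3 φ = 0 ∧ IsThreeForm H ∧ d3 H = 0 ∧
    (∀ α : Cov1 IM M, IsOneForm α → A (P α) = P (transp A α)) ∧
    (∀ α β : Cov1 IM M, IsOneForm α → IsOneForm β →
      concom P A α β = fun Z => - H (P α) (P β) Z) ∧
    (∀ X Y, torsion A X Y =
      P (fun Z => φ X Y Z + H (A X) Y Z + H X (A Y) Z)) ∧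
    dA3 A φ = d3 (cyc H A A)


/-- The exponential of a smooth function. -/
def expF (f : SmoothR IM M) : SmoothR IM M :=
  ⟨fun x => Real.exp (f x), (Real.contDiff_exp.contMDiff).comp f.contMDiff⟩

/-- The wedge product of a 1-form with a 2-form. -/
def wedge12 (α : Cov1 IM M) (B : Cov2 IM M) : Cov3 IM M := fun X Y Z =>
  α X * B Y Z - α Y * B X Z + α Z * B X Y

/-! ### Auxiliary analytic lemmas -/

/-- The first-order remainder of `Real.exp` at `0`. -/
noncomputable def expRem : ℝ → ℝ := dslope Real.exp 0

lemma expRem_contDiff {n : WithTop ℕ∞} : ContDiff ℝ n expRem := by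
  rw [contDiff_iff_contDiffAt]
  intro x
  rcases eq_or_ne x 0 with h | h
  · subst h
    obtain ⟨p, hp⟩ := (analyticAt_rexp (x := 0))
    exact (hp.has_fpower_series_dslope_fslope).analyticAt.contDiffAt
  · have h1 : ContDiffAt ℝ n (fun y => (Real.exp y - Real.exp 0) / (y - 0)) x :=
      ((Real.contDiff_exp.contDiffAt.sub contDiffAt_const).div
        (contDiffAt_id.sub contDiffAt_const) (by simpa using h))
    refine h1.congr_of_eventuallyEq ?_
    filter_upwards [eventually_ne_nhds h] with y hy
    rw [expRem, dslope_of_ne _ hy, slope_def_field]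

lemma expRem_zero : expRem 0 = 1 := by
  simp [expRem, dslope_same, Real.deriv_exp]

lemma exp_eq_expRem (t : ℝ) : Real.exp t = 1 + t * expRem t := by
  rcases eq_or_ne t 0 with h | h
  · simp [h]
  · rw [expRem, dslope_of_ne _ h, slope_def_field]
    field_simp
    rw [Real.exp_zero]; ring

/-- The chain rule for derivations of smooth functions, applied to `expF`. -/
lemma deriv_expF (D : VF IM M) (u : SmoothR IM M) : D (expF u) = expF u * D u := by
  ext p
  set c : ℝ := u p with hc
  set u0 : SmoothR IM M := u - algebraMap ℝ (SmoothR IM M) c with hu0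
  set G : SmoothR IM M :=
    ⟨fun x => expRem (u0 x), (expRem_contDiff.contMDiff).comp u0.contMDiff⟩ with hG
  have h2 : ∀ x, u0 x = u x - c := fun x => rfl
  have hGx : ∀ x, G x = expRem (u0 x) := fun x => rfl
  have key : expF u = algebraMap ℝ (SmoothR IM M) (Real.exp c) * (1 + u0 * G) := by
    ext x
    show Real.exp (u x) = _
    have : (algebraMap ℝ (SmoothR IM M) (Real.exp c) * (1 + u0 * G)) x
        = Real.exp c * (1 + (u x - c) * expRem (u x - c)) := by
      show Real.exp c * ((1:SmoothR IM M) + u0 * G) x = _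
      show Real.exp c * ((1:ℝ) + (u0 * G) x) = _
      rw [show (u0 * G) x = u0 x * G x from rfl, hGx, h2]
    rw [this, ← exp_eq_expRem, ← Real.exp_add]
    ring_nf
  have hDu0 : D u0 = D u := by rw [hu0, map_sub, Derivation.map_algebraMap, sub_zero]
  have hD : D (expF u) =
      algebraMap ℝ (SmoothR IM M) (Real.exp c) • (u0 • D G + G • D u) := by
    rw [key, Derivation.leibniz, Derivation.map_algebraMap, smul_zero, add_zero,
      map_add, Derivation.map_one_eq_zero, Derivation.leibniz, hDu0, zero_add]
  rw [hD]
  have hu0p : u0 p = 0 := by rw [h2, hc, sub_self]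
  have hGp : G p = 1 := by rw [hGx, hu0p, expRem_zero]
  show Real.exp c * ((u0 • D G + G • D u) p) = (expF u * D u) p
  show Real.exp c * ((u0 • D G) p + (G • D u) p) = (expF u) p * (D u) p
  show Real.exp c * (u0 p * (D G) p + G p * (D u) p) = Real.exp (u p) * (D u) p
  rw [hu0p, hGp, hc]
  ring

lemma expF_mul_expF_neg (u : SmoothR IM M) : expF u * expF (-u) = 1 := by
  ext x
  show Real.exp (u x) * Real.exp ((-u) x) = 1
  rw [show (-u) x = -(u x) from rfl, ← Real.exp_add]
  simp

/-! ### Basic lemmas on forms and vector fields -/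

lemma vf_lie_apply (X Y : VF IM M) (u : SmoothR IM M) : ⁅X, Y⁆ u = X (Y u) - Y (X u) := rfl

lemma vf_smul_apply (g : SmoothR IM M) (X : VF IM M) (u : SmoothR IM M) :
    (g • X) u = g * X u := rfl

lemma vf_lie_add (X Y Z : VF IM M) : ⁅X, Y+Z⁆ = ⁅X,Y⁆+⁅X,Z⁆ := by
  apply Derivation.ext; intro u
  simp only [vf_lie_apply, Derivation.add_apply, map_add]; ring

lemma vf_add_lie (X Y Z : VF IM M) : ⁅X+Y, Z⁆ = ⁅X,Z⁆+⁅Y,Z⁆ := by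
  apply Derivation.ext; intro u
  simp only [vf_lie_apply, Derivation.add_apply, map_add]; ring

lemma vf_lie_self (X : VF IM M) : ⁅X, X⁆ = 0 := by
  apply Derivation.ext; intro u
  simp only [vf_lie_apply, Derivation.zero_apply]; ring

lemma vf_lie_skew (X Y : VF IM M) : ⁅X, Y⁆ = -⁅Y,X⁆ := by
  apply Derivation.ext; intro u
  simp only [vf_lie_apply, Derivation.neg_apply]; ring

lemma vf_jacobi (X Y Z : VF IM M) : ⁅⁅X,Y⁆,Z⁆ = ⁅X,⁅Y,Z⁆⁆ - ⁅Y,⁅X,Z⁆⁆ := by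
  apply Derivation.ext; intro u
  simp only [vf_lie_apply, Derivation.sub_apply, map_sub]; ring

lemma vf_lie_smul (X Y : VF IM M) (g : SmoothR IM M) :
    ⁅X, g • Y⁆ = g • ⁅X, Y⁆ + (X g) • Y := by
  apply Derivation.ext; intro u
  simp only [vf_lie_apply, Derivation.add_apply, vf_smul_apply, Derivation.leibniz,
    smul_eq_mul]
  ring

lemma vf_lie_neg (X Y : VF IM M) : ⁅X, -Y⁆ = -⁅X,Y⁆ := by
  apply Derivation.ext; intro u
  simp only [vf_lie_apply, Derivation.neg_apply, map_neg]; ring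

lemma vf_lie_sub (X Y Z : VF IM M) : ⁅X, Y-Z⁆ = ⁅X,Y⁆-⁅X,Z⁆ := by
  apply Derivation.ext; intro u
  simp only [vf_lie_apply, Derivation.sub_apply, map_sub]; ring

namespace IsOneForm

variable {α : Cov1 IM M}

lemma zero_app (h : IsOneForm α) : α 0 = 0 := by
  have h0 := h.1 0 0
  rw [add_zero] at h0
  linear_combination -h0

lemma neg_app (h : IsOneForm α) (X : VF IM M) : α (-X) = - α X := by
  have h0 := h.1 X (-X)
  rw [add_neg_cancel, h.zero_app] at h0
  linear_combination -h0

lemma sub_app (h : IsOneForm α) (X Y : VF IM M) : α (X - Y) = α X - α Y := by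
  rw [sub_eq_add_neg, h.1, h.neg_app, sub_eq_add_neg]

end IsOneForm

lemma isOneForm_dF (u : SmoothR IM M) : IsOneForm (dF (IM := IM) (M := M) u) := by
  constructor
  · intro X Y; exact Derivation.add_apply _
  · intro g X; exact rfl

lemma isOneForm_add {α β : Cov1 IM M} (hα : IsOneForm α) (hβ : IsOneForm β) :
    IsOneForm (α + β) := by
  constructor
  · intro X Y
    show α (X+Y) + β (X+Y) = (α X + β X) + (α Y + β Y)
    rw [hα.1, hβ.1]; ring
  · intro g X
    show α (g • X) + β (g • X) = g * (α X + β X)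
    rw [hα.2, hβ.2]; ring

lemma isOneForm_neg {α : Cov1 IM M} (hα : IsOneForm α) : IsOneForm (-α) := by
  constructor
  · intro X Y
    show -(α (X+Y)) = -(α X) + -(α Y)
    rw [hα.1]; ring
  · intro g X
    show -(α (g • X)) = g * -(α X)
    rw [hα.2]; ring

lemma isOneForm_sub {α β : Cov1 IM M} (hα : IsOneForm α) (hβ : IsOneForm β) :
    IsOneForm (α - β) := by
  rw [sub_eq_add_neg]; exact isOneForm_add hα (isOneForm_neg hβ)

lemma isOneForm_lieDer {α : Cov1 IM M} (X : VF IM M) (hα : IsOneForm α) :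
    IsOneForm (lieDer X α) := by
  constructor
  · intro Y Z
    simp only [lieDer]
    rw [vf_lie_add, hα.1, hα.1, map_add]
    ring
  · intro g Y
    simp only [lieDer]
    rw [hα.2, vf_lie_smul, hα.1, hα.2, hα.2, Derivation.leibniz]
    simp only [smul_eq_mul]
    ring

namespace IsTwoForm

variable {W : Cov2 IM M}

lemma addl (h : IsTwoForm W) (X Y Z : VF IM M) : W (X + Y) Z = W X Z + W Y Z :=
  (h.2.1 Z).1 X Y

lemma smull (h : IsTwoForm W) (g : SmoothR IM M) (X Z : VF IM M) :
    W (g • X) Z = g * W X Z := (h.2.1 Z).2 g X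

lemma negl (h : IsTwoForm W) (X Z : VF IM M) : W (-X) Z = - W X Z :=
  (h.2.1 Z).neg_app X

lemma subl (h : IsTwoForm W) (X Y Z : VF IM M) : W (X - Y) Z = W X Z - W Y Z :=
  (h.2.1 Z).sub_app X Y

lemma zerol (h : IsTwoForm W) (Z : VF IM M) : W 0 Z = 0 := (h.2.1 Z).zero_app

lemma skew (h : IsTwoForm W) (X Y : VF IM M) : W X Y = - W Y X := by
  have h0 := h.2.2 (X + Y)
  rw [h.addl, (h.1 X).1, (h.1 Y).1, h.2.2, h.2.2] at h0
  linear_combination h0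

end IsTwoForm
/-! ### Poisson calculus -/

section PoissonCore

variable {P : Cov1 IM M → VF IM M}

lemma P_zero (hb : IsBivector P) : P 0 = 0 := by
  have h := hb.1 0 0
  rw [add_zero] at h
  exact (add_eq_left.mp h.symm)

lemma P_neg (hb : IsBivector P) (α : Cov1 IM M) : P (-α) = - P α := by
  have h := hb.1 α (-α)
  rw [add_neg_cancel, P_zero hb] at h
  rw [eq_neg_iff_add_eq_zero, add_comm]
  exact h.symm

lemma P_sub (hb : IsBivector P) (α β : Cov1 IM M) : P (α - β) = P α - P β := by
  rw [sub_eq_add_neg, hb.1, P_neg hb, sub_eq_add_neg]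

/-- `P α` applied to a function, for a one-form `α`. -/
lemma papp (hb : IsBivector P) {α : Cov1 IM M} (hα : IsOneForm α) (u : SmoothR IM M) :
    (P α) u = - α (P (dF u)) :=
  hb.2.2 (dF u) α (isOneForm_dF u) hα

/-- Skew-symmetry of the Poisson bracket. -/
lemma pb_skew (hb : IsBivector P) (u v : SmoothR IM M) :
    P (dF u) v = - P (dF v) u :=
  hb.2.2 (dF v) (dF u) (isOneForm_dF v) (isOneForm_dF u)

/-- Hamiltonian vector fields: `[X_u, X_v] = X_{{u,v}}`. -/
lemma ham_lie (hP : IsPoisson P) (u v : SmoothR IM M) :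
    ⁅P (dF u), P (dF v)⁆ = P (dF (P (dF u) v)) := by
  apply Derivation.ext; intro w
  have j := hP.2 u v w
  simp only [pbracket] at j
  have s1 : P (dF w) u = - P (dF u) w := pb_skew hP.1 w u
  rw [s1, map_neg] at j
  have s2 : P (dF w) (P (dF u) v) = - P (dF (P (dF u) v)) w :=
    pb_skew hP.1 w (P (dF u) v)
  rw [s2] at j
  rw [vf_lie_apply]
  linear_combination j

/-- `[P α, X_h] = - P (L_{X_h} α)` for a one-form `α`. -/
lemma lie_P_ham (hP : IsPoisson P) {α : Cov1 IM M} (hα : IsOneForm α) (h : SmoothR IM M) :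
    ⁅P α, P (dF h)⁆ = - P (lieDer (P (dF h)) α) := by
  apply Derivation.ext; intro u
  have e1 : P (dF h) u = P (dF h) u := rfl
  rw [vf_lie_apply, Derivation.neg_apply]
  rw [papp hP.1 hα u]
  rw [map_neg]
  rw [papp hP.1 hα (P (dF h) u)]
  rw [papp hP.1 (isOneForm_lieDer _ hα) u]
  rw [← ham_lie hP h u]
  simp only [lieDer]
  ring

lemma lie_ham_P (hP : IsPoisson P) {α : Cov1 IM M} (hα : IsOneForm α) (h : SmoothR IM M) :
    ⁅P (dF h), P α⁆ = P (lieDer (P (dF h)) α) := by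
  rw [vf_lie_skew, lie_P_ham hP hα h, neg_neg]

/-- The Koszul bracket of two 1-forms. -/
def kos (P : Cov1 IM M → VF IM M) (α β : Cov1 IM M) : Cov1 IM M :=
  lieDer (P α) β - lieDer (P β) α - dF (β (P α))

lemma isOneForm_kos (hα : IsOneForm α) (hβ : IsOneForm β) :
    IsOneForm (kos P α β) :=
  isOneForm_sub (isOneForm_sub (isOneForm_lieDer _ hβ) (isOneForm_lieDer _ hα))
    (isOneForm_dF _)

lemma kos_apply (P : Cov1 IM M → VF IM M) (α β : Cov1 IM M) (Z : VF IM M) :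
    kos P α β Z = (P α) (β Z) - β ⁅P α, Z⁆ - (P β) (α Z) + α ⁅P β, Z⁆
      - Z (β (P α)) := by
  simp only [kos, Pi.sub_apply, lieDer, dF]
  ring

/-- The anchor property: `[P α, P β] = P (kos α β)` for one-forms. -/
lemma anchor (hP : IsPoisson P) {α β : Cov1 IM M}
    (hα : IsOneForm α) (hβ : IsOneForm β) :
    ⁅P α, P β⁆ = P (kos P α β) := by
  apply Derivation.ext; intro h
  rw [vf_lie_apply]
  rw [papp hP.1 hβ h, papp hP.1 hα h, map_neg, map_neg]
  rw [papp hP.1 (isOneForm_kos hα hβ) h, kos_apply]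
  rw [lie_P_ham hP hβ h, hα.neg_app, hP.1.2.2 α _ hα (isOneForm_lieDer _ hβ)]
  simp only [lieDer]
  rw [vf_lie_skew (P (dF h)) (P α), hβ.neg_app]
  ring

end PoissonCore
/-! ### The fundamental trilinear identity -/

/-- Vanishing of `[P,P]` against three one-forms. -/
lemma bigJ {P : Cov1 IM M → VF IM M} (hP : IsPoisson P) {α β γ : Cov1 IM M}
    (hα : IsOneForm α) (hβ : IsOneForm β) (hγ : IsOneForm γ) :
    γ ⁅P α, P β⁆ - β ⁅P α, P γ⁆ + α ⁅P β, P γ⁆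
      = (P α) (γ (P β)) - (P β) (γ (P α)) - (P γ) (α (P β)) := by
  rw [anchor hP hα hβ, hP.1.2.2 γ (kos P α β) hγ (isOneForm_kos hα hβ), kos_apply]
  rw [hP.1.2.2 β γ hβ hγ, map_neg]
  rw [hP.1.2.2 α γ hα hγ, map_neg]
  rw [hP.1.2.2 β α hβ hα, map_neg]
  ring

/-! ### Exterior differential calculus -/

lemma vf_smul_lie (X Y : VF IM M) (g : SmoothR IM M) :
    ⁅g • X, Y⁆ = g • ⁅X, Y⁆ - (Y g) • X := by
  apply Derivation.ext; intro u
  simp only [vf_lie_apply, Derivation.sub_apply, vf_smul_apply, Derivation.leibniz,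
    smul_eq_mul]
  ring

lemma jac3 (A B C : VF IM M) : ⁅⁅A,B⁆,C⁆ = ⁅⁅A,C⁆,B⁆ - ⁅⁅B,C⁆,A⁆ := by
  apply Derivation.ext; intro u
  simp only [vf_lie_apply, Derivation.sub_apply, map_sub]
  ring

lemma tripleJ {ω : Cov2 IM M} (hω : IsTwoForm ω) (A B C D : VF IM M) :
    ω ⁅⁅A,B⁆,C⁆ D = ω ⁅⁅A,C⁆,B⁆ D - ω ⁅⁅B,C⁆,A⁆ D := by
  rw [jac3, hω.subl]

lemma isThreeForm_neg {φ : Cov3 IM M} (h : IsThreeForm φ) : IsThreeForm (-φ) := by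
  obtain ⟨h1, h2, h3, h4, h5, h6⟩ := h
  refine ⟨fun X Y => ?_, fun X Z => ?_, fun Y Z => ?_, fun X Y => ?_, fun X Y => ?_,
    fun X Y => ?_⟩
  · exact isOneForm_neg (h1 X Y)
  · exact isOneForm_neg (h2 X Z)
  · exact isOneForm_neg (h3 Y Z)
  · show -(φ X X Y) = 0; rw [h4]; ring
  · show -(φ X Y Y) = 0; rw [h5]; ring
  · show -(φ X Y X) = 0; rw [h6]; ring

lemma isThreeForm_d2 {ω : Cov2 IM M} (hω : IsTwoForm ω) : IsThreeForm (d2 ω) := by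
  refine ⟨fun X Y => ⟨fun Z Z' => ?_, fun g Z => ?_⟩,
    fun X Z => ⟨fun Y Y' => ?_, fun g Y => ?_⟩,
    fun Y Z => ⟨fun X X' => ?_, fun g X => ?_⟩,
    fun X Y => ?_, fun X Y => ?_, fun X Y => ?_⟩
  · -- additivity in Z
    simp only [d2]
    rw [(hω.1 Y).1, (hω.1 X).1, map_add, map_add, Derivation.add_apply,
      vf_lie_add X Z Z', vf_lie_add Y Z Z', hω.addl, hω.addl, (hω.1 ⁅X,Y⁆).1]
    ring
  · -- smul in Z
    simp only [d2]
    rw [(hω.1 Y).2, (hω.1 X).2, Derivation.leibniz, Derivation.leibniz,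
      vf_smul_apply, vf_lie_smul X Z g, vf_lie_smul Y Z g, hω.addl, hω.addl,
      hω.smull, hω.smull, hω.smull, hω.smull, (hω.1 ⁅X,Y⁆).2,
      hω.skew Z Y, hω.skew Z X]
    simp only [smul_eq_mul]
    ring
  · -- additivity in Y
    simp only [d2]
    rw [(hω.1 X).1, hω.addl, map_add, Derivation.add_apply, vf_add_lie,
      vf_lie_add X Y Y', hω.addl, hω.addl, (hω.1 ⁅X,Z⁆).1]
    simp only [map_add]
    ring
  · -- smul in Y
    simp only [d2]
    rw [(hω.1 X).2, hω.smull, Derivation.leibniz, Derivation.leibniz,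
      vf_smul_apply, vf_lie_smul X Y g, vf_smul_lie Y Z g, hω.addl, hω.subl,
      hω.smull, hω.smull, hω.smull, hω.smull, (hω.1 ⁅X,Z⁆).2, hω.skew Y X]
    simp only [smul_eq_mul]
    ring
  · -- additivity in X
    simp only [d2]
    rw [hω.addl, hω.addl, map_add, Derivation.add_apply, vf_add_lie,
      vf_add_lie, hω.addl, hω.addl, (hω.1 ⁅Y,Z⁆).1]
    simp only [map_add]
    ring
  · -- smul in X
    simp only [d2]
    rw [hω.smull, hω.smull, Derivation.leibniz, Derivation.leibniz,
      vf_smul_apply, vf_smul_lie X Y g, vf_smul_lie X Z g, hω.subl, hω.subl,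
      hω.smull, hω.smull, hω.smull, hω.smull, (hω.1 ⁅Y,Z⁆).2,
      hω.skew X Y, hω.skew X Z]
    simp only [smul_eq_mul]
    ring
  · -- d2 ω X X Y = 0
    simp only [d2]
    rw [vf_lie_self, hω.zerol, hω.2.2 X, map_zero]
    ring
  · -- d2 ω X Y Y = 0
    simp only [d2]
    rw [vf_lie_self, hω.zerol, hω.2.2 Y, map_zero]
    ring
  · -- d2 ω X Y X = 0
    simp only [d2]
    rw [vf_lie_self, hω.zerol, hω.2.2 X, map_zero,
      hω.skew Y X, map_neg, show ⁅Y,X⁆ = -⁅X,Y⁆ from vf_lie_skew _ _, hω.negl]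
    ring

/-- `d ∘ d = 0` on 2-forms. -/
lemma d3_d2 {ω : Cov2 IM M} (hω : IsTwoForm ω) : d3 (d2 ω) = 0 := by
  funext X Y Z V
  show _ = (0 : SmoothR IM M)
  simp only [d3, d2, map_add, map_sub, vf_lie_apply]
  have jV := tripleJ hω X Y Z V
  have jZ := tripleJ hω X Y V Z
  have jY := tripleJ hω X Z V Y
  have jX := tripleJ hω Y Z V X
  have s1 : ω ⁅Z,V⁆ ⁅X,Y⁆ = -ω ⁅X,Y⁆ ⁅Z,V⁆ := hω.skew _ _
  have s2 : ω ⁅Y,V⁆ ⁅X,Z⁆ = -ω ⁅X,Z⁆ ⁅Y,V⁆ := hω.skew _ _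
  have s3 : ω ⁅Y,Z⁆ ⁅X,V⁆ = -ω ⁅X,V⁆ ⁅Y,Z⁆ := hω.skew _ _
  linear_combination jV - jZ + jY - jX + s1 - s2 + s3
/-! ### The gauge PqNb structure `(P, P∘ω, -d(ω_C), dω)` -/

section Gauge

variable {P : Cov1 IM M → VF IM M} {ω : Cov2 IM M}

/-- Self-adjointness of `C = P ∘ ω♭` with respect to `ω`. -/
lemma selfadj (hP : IsPoisson P) (hω : IsTwoForm ω) (U V : VF IM M) :
    ω (P (ω U)) V = ω U (P (ω V)) := by
  rw [hω.skew, hP.1.2.2 (ω V) (ω U) (hω.1 V) (hω.1 U), hω.skew U (P (ω V))]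
  ring

lemma omega_P_omega_self (hP : IsPoisson P) (hω : IsTwoForm ω) (X : VF IM M) :
    ω X (P (ω X)) = 0 := by
  have h := hP.1.2.2 (ω X) (ω X) (hω.1 X) (hω.1 X)
  have h2 : ∀ p : M, (ω X (P (ω X))) p = 0 := by
    intro p
    have := congrFun (congrArg DFunLike.coe h) p
    rw [show (-(ω X (P (ω X)))) p = -((ω X (P (ω X))) p) from rfl] at this
    linarith
  ext p; exact h2 p

lemma cov1_omega_add (hω : IsTwoForm ω) (X Y : VF IM M) :
    ω (X + Y) = ω X + ω Y := funext fun Z => hω.addl X Y Z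

lemma cov1_omega_smul (hω : IsTwoForm ω) (g : SmoothR IM M) (X : VF IM M) :
    ω (g • X) = g • ω X := funext fun Z => hω.smull g X Z

lemma cov1_omega_sub (hω : IsTwoForm ω) (X Y : VF IM M) :
    ω (X - Y) = ω X - ω Y := funext fun Z => hω.subl X Y Z

lemma C_tensor (hP : IsPoisson P) (hω : IsTwoForm ω) :
    IsTensor11 (fun X => P (ω X)) := by
  constructor
  · intro X Y
    show P (ω (X + Y)) = _
    rw [cov1_omega_add hω, hP.1.1]
  · intro g X
    show P (ω (g • X)) = _
    rw [cov1_omega_smul hω, hP.1.2.1]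

lemma isTwoForm_lcompC (hP : IsPoisson P) (hω : IsTwoForm ω) :
    IsTwoForm (lcomp ω fun X => P (ω X)) := by
  refine ⟨fun X => ⟨fun Y Y' => ?_, fun g Y => ?_⟩, fun Y => ⟨fun X X' => ?_, fun g X => ?_⟩,
    fun X => ?_⟩ <;> dsimp only [lcomp]
  · exact (hω.1 _).1 Y Y'
  · exact (hω.1 _).2 g Y
  · show ω (P (ω (X + X'))) Y = _
    rw [cov1_omega_add hω, hP.1.1, hω.addl]
  · show ω (P (ω (g • X))) Y = _
    rw [cov1_omega_smul hω, hP.1.2.1, hω.smull]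
  · show ω (P (ω X)) X = 0
    rw [hω.skew]
    rw [omega_P_omega_self hP hω]
    ring

/-- The 2-form `σ(X,Y) = ω(CX, CY)`. -/
lemma isTwoForm_sigma (hP : IsPoisson P) (hω : IsTwoForm ω) :
    IsTwoForm (fun X Y => ω (P (ω X)) (P (ω Y))) := by
  refine ⟨fun X => ⟨fun Y Y' => ?_, fun g Y => ?_⟩, fun Y => ⟨fun X X' => ?_, fun g X => ?_⟩,
    fun X => ?_⟩ <;> dsimp only
  · rw [cov1_omega_add hω, hP.1.1, (hω.1 _).1]
  · rw [cov1_omega_smul hω, hP.1.2.1, (hω.1 _).2]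
  · show ω (P (ω (X + X'))) (P (ω Y)) = _
    rw [cov1_omega_add hω, hP.1.1, hω.addl]
  · show ω (P (ω (g • X))) (P (ω Y)) = _
    rw [cov1_omega_smul hω, hP.1.2.1, hω.smull]
  · exact hω.2.2 _

/-- Compatibility (2.1). -/
lemma gauge_compat (hP : IsPoisson P) (hω : IsTwoForm ω) {α : Cov1 IM M}
    (hα : IsOneForm α) :
    P (ω (P α)) = P (transp (fun X => P (ω X)) α) := by
  have : transp (fun X => P (ω X)) α = ω (P α) := by
    funext Z
    show α (P (ω Z)) = ω (P α) Z
    rw [hP.1.2.2 α (ω Z) hα (hω.1 Z), hω.skew Z (P α)]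
    ring
  rw [this]

end Gauge
section Gauge2

variable {P : Cov1 IM M → VF IM M} {ω : Cov2 IM M}

/-- Compatibility (2.2): the concomitant identity. -/
lemma gauge_concom (hP : IsPoisson P) (hω : IsTwoForm ω) {α β : Cov1 IM M}
    (hα : IsOneForm α) (hβ : IsOneForm β) :
    concom P (fun X => P (ω X)) α β
      = fun Z => - (d2 ω) (P α) (P β) Z := by
  have hc1 : ∀ U, α (P (ω U)) = ω (P α) U := fun U => by
    rw [hP.1.2.2 α (ω U) hα (hω.1 U), hω.skew U (P α)]; ring
  have hc2 : ∀ U, β (P (ω U)) = ω (P β) U := fun U => by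
    rw [hP.1.2.2 β (ω U) hβ (hω.1 U), hω.skew U (P β)]; ring
  have htr1 : transp (fun X => P (ω X)) α = ω (P α) := funext fun U => hc1 U
  have htr2 : transp (fun X => P (ω X)) β = ω (P β) := funext fun U => hc2 U
  funext Z
  simp only [concom, Pi.add_apply, Pi.sub_apply, htr1, htr2, lieDer, dF, bivFun,
    transp, d2]
  simp only [hc1, hc2]
  rw [hP.1.2.2 β α hβ hα]
  have hs : ω (P α) (P β) = -ω (P β) (P α) := hω.skew _ _
  simp only [hs, map_neg]
  have j := bigJ hP hα hβ (hω.1 Z)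
  simp only [hω.skew Z (P β), hω.skew Z (P α), map_neg] at j
  have s1 : ω (P α) ⁅P β, Z⁆ = -ω ⁅P β, Z⁆ (P α) := hω.skew _ _
  have s2 : ω (P β) ⁅P α, Z⁆ = -ω ⁅P α, Z⁆ (P β) := hω.skew _ _
  have s3 : ω ⁅P α, P β⁆ Z = -ω Z ⁅P α, P β⁆ := hω.skew _ _
  linear_combination j + s2 - s1 - s3

end Gauge2
section Gauge3

variable {P : Cov1 IM M → VF IM M} {ω : Cov2 IM M}

/-- Compatibility (2.3): the torsion identity. -/
lemma gauge_torsion (hP : IsPoisson P) (hω : IsTwoForm ω) (X Y : VF IM M) :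
    torsion (fun X => P (ω X)) X Y
      = P (fun Z => (-(d2 (lcomp ω fun X => P (ω X)))) X Y Z
          + d2 ω (P (ω X)) Y Z + d2 ω X (P (ω Y)) Z) := by
  have hμ : (fun Z => (-(d2 (lcomp ω fun X => P (ω X)))) X Y Z
          + d2 ω (P (ω X)) Y Z + d2 ω X (P (ω Y)) Z)
      = kos P (ω X) (ω Y)
        - (ω ⁅P (ω X), Y⁆ + ω ⁅X, P (ω Y)⁆ - ω (P (ω ⁅X,Y⁆))) := by
    funext Z
    simp only [Pi.neg_apply, Pi.sub_apply, Pi.add_apply, d2, lcomp, kos_apply]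
    have bz : ω X (P (ω Y)) = -ω Y (P (ω X)) := by
      rw [hω.skew X (P (ω Y)), selfadj hP hω Y X]
    simp only [bz, map_neg]
    have b1 : ω (P (ω ⁅X,Z⁆)) Y = ω ⁅X,Z⁆ (P (ω Y)) := selfadj hP hω _ _
    have b2 : ω (P (ω ⁅Y,Z⁆)) X = ω ⁅Y,Z⁆ (P (ω X)) := selfadj hP hω _ _
    have s1 : ω Y ⁅P (ω X),Z⁆ = -ω ⁅P (ω X),Z⁆ Y := hω.skew _ _
    have s2 : ω X ⁅P (ω Y),Z⁆ = -ω ⁅P (ω Y),Z⁆ X := hω.skew _ _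
    linear_combination -b1 + b2 + s1 - s2
  rw [hμ, P_sub hP.1, P_sub hP.1, hP.1.1]
  simp only [torsion]
  rw [anchor hP (hω.1 X) (hω.1 Y), cov1_omega_sub hω, cov1_omega_add hω,
    P_sub hP.1, hP.1.1]

end Gauge3
section Gauge4

variable {P : Cov1 IM M → VF IM M} {ω : Cov2 IM M}

lemma d3_neg (ψ : Cov3 IM M) : d3 (-ψ) = -(d3 ψ) := by
  funext X Y Z V
  simp only [d3, Pi.neg_apply, map_neg]
  ring

lemma d3_sub (ψ χ : Cov3 IM M) : d3 (ψ - χ) = d3 ψ - d3 χ := by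
  funext X Y Z V
  simp only [d3, Pi.sub_apply, map_sub]
  ring

lemma iota4_zero (A : VF IM M → VF IM M) : iota4 A (0 : Cov4 IM M) = 0 := by
  funext X Y Z V
  simp only [iota4, Pi.zero_apply]
  ring

/-- The key identity `ι_C φ + ℋ = -dσ`. -/
lemma gauge_theta (hP : IsPoisson P) (hω : IsTwoForm ω) :
    iota3 (fun X => P (ω X)) (-(d2 (lcomp ω fun X => P (ω X))))
        + cyc (d2 ω) (fun X => P (ω X)) (fun X => P (ω X))
      = -(d2 (fun X Y => ω (P (ω X)) (P (ω Y)))) := by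
  have ebr : ∀ A B D : VF IM M, ω ⁅P (ω A), P (ω B)⁆ D
      = kos P (ω A) (ω B) (P (ω D)) := by
    intro A B D
    rw [anchor hP (hω.1 A) (hω.1 B), hω.skew (P (kos P (ω A) (ω B))) D,
      hP.1.2.2 (ω D) (kos P (ω A) (ω B)) (hω.1 D) (isOneForm_kos (hω.1 A) (hω.1 B)),
      neg_neg]
  funext X Y Z
  simp only [iota3, cyc, Pi.add_apply, Pi.neg_apply, d2, lcomp]
  rw [ebr X Y Z, ebr Y Z X, ebr Z X Y]
  simp only [kos_apply, selfadj hP hω, map_neg]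
  have f1 : ω Y (P (ω X)) = -ω X (P (ω Y)) := by
    rw [hω.skew Y (P (ω X)), selfadj hP hω X Y]
  have f2 : ω Z (P (ω X)) = -ω X (P (ω Z)) := by
    rw [hω.skew Z (P (ω X)), selfadj hP hω X Z]
  have f3 : ω Z (P (ω Y)) = -ω Y (P (ω Z)) := by
    rw [hω.skew Z (P (ω Y)), selfadj hP hω Y Z]
  have g1 : ω Z (P (ω (P (ω X)))) = -ω X (P (ω (P (ω Z)))) := by
    rw [hω.skew Z (P (ω (P (ω X)))), selfadj hP hω (P (ω X)) Z,
      selfadj hP hω X (P (ω Z))]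
  have q1 : ω ⁅P (ω Y), X⁆ (P (ω Z)) = -ω ⁅X, P (ω Y)⁆ (P (ω Z)) := by
    rw [vf_lie_skew (P (ω Y)) X, hω.negl]
  have q2 : ω ⁅P (ω Z), Y⁆ (P (ω X)) = -ω ⁅Y, P (ω Z)⁆ (P (ω X)) := by
    rw [vf_lie_skew (P (ω Z)) Y, hω.negl]
  have q3 : ω ⁅P (ω Z), X⁆ (P (ω Y)) = -ω ⁅X, P (ω Z)⁆ (P (ω Y)) := by
    rw [vf_lie_skew (P (ω Z)) X, hω.negl]
  have bd1 : ω Y ⁅P (ω Z), P (ω X)⁆ = -ω Y ⁅P (ω X), P (ω Z)⁆ := by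
    rw [vf_lie_skew (P (ω Z)) (P (ω X)), (hω.1 Y).neg_app]
  have bd2 : ω Z ⁅P (ω Y), P (ω X)⁆ = -ω Z ⁅P (ω X), P (ω Y)⁆ := by
    rw [vf_lie_skew (P (ω Y)) (P (ω X)), (hω.1 Z).neg_app]
  have bd3 : ω X ⁅P (ω Z), P (ω Y)⁆ = -ω X ⁅P (ω Y), P (ω Z)⁆ := by
    rw [vf_lie_skew (P (ω Z)) (P (ω Y)), (hω.1 X).neg_app]
  simp only [f1, f2, f3, g1, q1, q2, q3, bd1, bd2, bd3, map_neg]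
  have j2 := bigJ hP (hω.1 X) (hω.1 Y) (hω.1 Z)
  simp only [f1, f2, f3, map_neg] at j2
  linear_combination -2 * j2

end Gauge4
section GaugeMain

variable {P : Cov1 IM M → VF IM M} {ω : Cov2 IM M}

/-- The gauge structure `(P, P∘ω♭, -d(ω_C), dω)` is PqNb. -/
lemma gauge_PqNb (hP : IsPoisson P) (hω : IsTwoForm ω) :
    IsPqNb P (fun X => P (ω X)) (-(d2 (lcomp ω fun X => P (ω X)))) (d2 ω) := by
  refine ⟨hP, C_tensor hP hω,
    isThreeForm_neg (isThreeForm_d2 (isTwoForm_lcompC hP hω)), ?_,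
    isThreeForm_d2 hω, d3_d2 hω, ?_, ?_, ?_, ?_⟩
  · rw [d3_neg, d3_d2 (isTwoForm_lcompC hP hω), neg_zero]
  · intro α hα
    exact gauge_compat hP hω hα
  · intro α β hα hβ
    exact gauge_concom hP hω hα hβ
  · intro X Y
    exact gauge_torsion hP hω X Y
  · show iota4 _ (d3 _) - d3 (iota3 _ _) = _
    have hφ : d3 (-(d2 (lcomp ω fun X => P (ω X)))) = 0 := by
      rw [d3_neg, d3_d2 (isTwoForm_lcompC hP hω), neg_zero]
    rw [hφ, iota4_zero]
    have ht : iota3 (fun X => P (ω X)) (-(d2 (lcomp ω fun X => P (ω X))))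
        = -(d2 (fun X Y => ω (P (ω X)) (P (ω Y))))
          - cyc (d2 ω) (fun X => P (ω X)) (fun X => P (ω X)) :=
      eq_sub_of_add_eq (gauge_theta hP hω)
    rw [ht, d3_sub, d3_neg, d3_d2 (isTwoForm_sigma hP hω), neg_zero, zero_sub,
      neg_sub, sub_zero]

end GaugeMain

/-! ### Conformal change by a Casimir -/

section Conformal

variable {P : Cov1 IM M → VF IM M}

lemma casimir_exp (hP : IsPoisson P) {f : SmoothR IM M} (hf : P (dF f) = 0)
    (u : SmoothR IM M) : P (dF u) (expF f) = 0 := by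
  rw [deriv_expF, pb_skew hP.1 u f, hf]
  show expF f * -((0 : VF IM M) u) = 0
  rw [Derivation.zero_apply]
  ring

lemma conf_poisson (hP : IsPoisson P) {f : SmoothR IM M} (hf : P (dF f) = 0) :
    IsPoisson (fun α => expF f • P α) := by
  refine ⟨⟨fun α β => ?_, fun g α => ?_, fun α β hα hβ => ?_⟩, fun u v w => ?_⟩
  · show expF f • P (α + β) = _
    rw [hP.1.1, smul_add]
  · show expF f • P (g • α) = _
    rw [hP.1.2.1]
    apply Derivation.ext; intro u
    simp only [vf_smul_apply]
    ring
  · show α (expF f • P β) = -(β (expF f • P α))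
    rw [hα.2, hβ.2, hP.1.2.2 α β hα hβ]
    ring
  · simp only [pbracket, vf_smul_apply]
    rw [Derivation.leibniz, Derivation.leibniz, Derivation.leibniz]
    simp only [casimir_exp hP hf, smul_eq_mul, mul_zero, zero_mul, add_zero, zero_add]
    have j := hP.2 u v w
    simp only [pbracket] at j
    linear_combination (expF f * expF f) * j
end Conformal
section Final

variable {P : Cov1 IM M → VF IM M}

lemma isTwoForm_smul (g : SmoothR IM M) {B : Cov2 IM M} (hB : IsTwoForm B) :
    IsTwoForm (g • B) := by
  refine ⟨fun X => ⟨fun Y Y' => ?_, fun h Y => ?_⟩, fun Y => ⟨fun X X' => ?_, fun h X => ?_⟩,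
    fun X => ?_⟩
  · show g * B X (Y + Y') = g * B X Y + g * B X Y'
    rw [(hB.1 X).1]; ring
  · show g * B X (h • Y) = h * (g * B X Y)
    rw [(hB.1 X).2]; ring
  · show g * B (X + X') Y = g * B X Y + g * B X' Y
    rw [hB.addl]; ring
  · show g * B (h • X) Y = h * (g * B X Y)
    rw [hB.smull]; ring
  · show g * B X X = 0
    rw [hB.2.2]; ring

lemma wedge12_dF_neg (u : SmoothR IM M) (G : Cov2 IM M) :
    wedge12 (dF (-u)) G = -(wedge12 (dF u) G) := by
  funext X Y Z
  simp only [wedge12, dF, map_neg, Pi.neg_apply]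
  ring

lemma d2_expF_smul (u : SmoothR IM M) (G : Cov2 IM M) :
    d2 (expF u • G) = expF u • (d2 G + wedge12 (dF u) G) := by
  funext X Y Z
  simp only [d2, wedge12, dF, Pi.smul_apply, smul_eq_mul, Pi.add_apply]
  rw [Derivation.leibniz, Derivation.leibniz, Derivation.leibniz]
  simp only [deriv_expF, smul_eq_mul]
  ring

theorem conformal_gauge_PqNb'
    (P : Cov1 IM M → VF IM M) (hP : IsPoisson P)
    (f : SmoothR IM M) (hf : P (dF f) = 0)
    (B : Cov2 IM M) (hB : IsTwoForm B) :
    IsPqNb (fun α => expF f • P α) (fun X => P (B X))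
        (expF (-f) • (-(d2 (lcomp B fun X => P (B X)))
          + wedge12 (dF f) (lcomp B fun X => P (B X))))
        (expF (-f) • (d2 B - wedge12 (dF f) B)) ∧
    IsPqNb (fun α => expF f • P α) (fun X => expF f • P (B X))
        (expF f • (-(d2 (lcomp B fun X => P (B X)))
          - wedge12 (dF f) (lcomp B fun X => P (B X))))
        (d2 B) := by
  have hP' : IsPoisson (fun α => expF f • P α) := conf_poisson hP hf
  have hω₁ : IsTwoForm (expF (-f) • B) := isTwoForm_smul _ hB
  have eA1 : (fun X : VF IM M => P (B X))
      = fun X => expF f • P ((expF (-f) • B) X) := by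
    funext X
    show P (B X) = expF f • P (expF (-f) • B X)
    rw [hP.1.2.1, smul_smul, expF_mul_expF_neg, one_smul]
  constructor
  · -- first structure
    have eφ1 : (expF (-f) • (-(d2 (lcomp B fun X => P (B X)))
          + wedge12 (dF f) (lcomp B fun X => P (B X))))
        = -(d2 (lcomp (expF (-f) • B) (fun X => P (B X)))) := by
      have hl : lcomp (expF (-f) • B) (fun X => P (B X))
          = expF (-f) • lcomp B (fun X => P (B X)) := rfl
      rw [hl, d2_expF_smul, wedge12_dF_neg]
      funext X Y Z
      simp only [Pi.smul_apply, smul_eq_mul, Pi.sub_apply, Pi.add_apply, Pi.neg_apply]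
      ring
    have eH1 : (expF (-f) • (d2 B - wedge12 (dF f) B)) = d2 (expF (-f) • B) := by
      rw [d2_expF_smul, wedge12_dF_neg]
      funext X Y Z
      simp only [Pi.smul_apply, smul_eq_mul, Pi.sub_apply, Pi.add_apply, Pi.neg_apply]
      ring
    rw [eφ1, eH1, eA1]
    exact gauge_PqNb hP' hω₁
  · -- second structure
    have eφ2 : (expF f • (-(d2 (lcomp B fun X => P (B X)))
          - wedge12 (dF f) (lcomp B fun X => P (B X))))
        = -(d2 (lcomp B (fun X => expF f • P (B X)))) := by
      have hl : lcomp B (fun X => expF f • P (B X))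
          = expF f • lcomp B (fun X => P (B X)) := by
        funext X Y
        exact hB.smull _ _ _
      rw [hl, d2_expF_smul]
      funext X Y Z
      simp only [Pi.smul_apply, smul_eq_mul, Pi.sub_apply, Pi.add_apply, Pi.neg_apply]
      ring
    rw [eφ2]
    exact gauge_PqNb hP' hB

end Final

/-- **Proposition 3.9 (conformal change combined with gauge transformation).**
Let `P` be a Poisson bivector on `M`, `f` a Casimir function of `P` and `B` a 2-form;
set `C = P♯ ∘ B♭`.  Then both
`(e^f P, C, e^{-f}(-dB_C + df ∧ B_C), e^{-f}(dB - df ∧ B))` and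
`(e^f P, e^f C, e^f(-dB_C - df ∧ B_C), dB)` are Poisson quasi-Nijenhuis structures with
background on `M`. -/
theorem conformal_gauge_PqNb
    (P : Cov1 IM M → VF IM M) (hP : IsPoisson P)
    (f : SmoothR IM M) (hf : P (dF f) = 0)
    (B : Cov2 IM M) (hB : IsTwoForm B) :
    IsPqNb (fun α => expF f • P α) (fun X => P (B X))
        (expF (-f) • (-(d2 (lcomp B fun X => P (B X)))
          + wedge12 (dF f) (lcomp B fun X => P (B X))))
        (expF (-f) • (d2 B - wedge12 (dF f) B)) ∧
    IsPqNb (fun α => expF f • P α) (fun X => expF f • P (B X))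
        (expF f • (-(d2 (lcomp B fun X => P (B X)))
          - wedge12 (dF f) (lcomp B fun X => P (B X))))
        (d2 B) :=
  conformal_gauge_PqNb' P hP f hf B hB

end
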